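/- Let u : [a,b] → ℂ be C^4 and q : [a,b] → ℝ be C^4. Then −Re ∫_a^b ∂_x^4 u ( \bar{∂_x u} q + (1/2) \bar u ∂_x q ) dx = −2∫_a^b |∂_x^2 u|^2 ∂_x q dx + (3/2)∫_a^b |∂_x u|^2 ∂_x^3 q dx + (1/2) Re ∫_a^b ∂_x u \bar u ∂_x^4 q dx + (1/2)[|∂_x^2 u|^2 q]_a^b − [|∂_x u|^2 ∂_x^2 q]_a^b + (3/2) Re[∂_x^2 u \bar{∂_x u} ∂_x q]_a^b − Re[∂_x^3 u \bar{∂_x u} q]_a^b − (1/2) Re[∂_x u \bar u ∂_x^3 q]_a^b + (1/2) Re[∂_x^2 u \bar u ∂_x^2 q]_a^b − (1/2) Re[∂_x^3 u \bar u ∂_x q]_a^b. -/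

import Mathlib

open Complex intervalIntegral

theorem multiplier_bilaplacian (a b : ℝ) (hab : a ≤ b) (u : ℝ → ℂ) (q : ℝ → ℝ)
    (hu : ContDiff ℝ 4 u) (hq : ContDiff ℝ 4 q) :
    -(∫ x in a..b, iteratedDeriv 4 u x *
        ((starRingEnd ℂ) (deriv u x) * Complex.ofReal (q x)
          + (1 / 2 : ℂ) * (starRingEnd ℂ) (u x) * Complex.ofReal (deriv q x))).re
    = -2 * (∫ x in a..b, ‖iteratedDeriv 2 u x‖ ^ 2 * deriv q x)
      + (3 / 2 : ℝ) * (∫ x in a..b, ‖deriv u x‖ ^ 2 * iteratedDeriv 3 q x)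
      + (1 / 2 : ℝ) * (∫ x in a..b,
          deriv u x * (starRingEnd ℂ) (u x) * Complex.ofReal (iteratedDeriv 4 q x)).re
      + (1 / 2 : ℝ) * (‖iteratedDeriv 2 u b‖ ^ 2 * q b - ‖iteratedDeriv 2 u a‖ ^ 2 * q a)
      - (‖deriv u b‖ ^ 2 * iteratedDeriv 2 q b - ‖deriv u a‖ ^ 2 * iteratedDeriv 2 q a)
      + (3 / 2 : ℝ) * (iteratedDeriv 2 u b * (starRingEnd ℂ) (deriv u b) * Complex.ofReal (deriv q b)
          - iteratedDeriv 2 u a * (starRingEnd ℂ) (deriv u a) * Complex.ofReal (deriv q a)).re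
      - (iteratedDeriv 3 u b * (starRingEnd ℂ) (deriv u b) * Complex.ofReal (q b)
          - iteratedDeriv 3 u a * (starRingEnd ℂ) (deriv u a) * Complex.ofReal (q a)).re
      - (1 / 2 : ℝ) * (deriv u b * (starRingEnd ℂ) (u b) * Complex.ofReal (iteratedDeriv 3 q b)
          - deriv u a * (starRingEnd ℂ) (u a) * Complex.ofReal (iteratedDeriv 3 q a)).re
      + (1 / 2 : ℝ) * (iteratedDeriv 2 u b * (starRingEnd ℂ) (u b) * Complex.ofReal (iteratedDeriv 2 q b)
          - iteratedDeriv 2 u a * (starRingEnd ℂ) (u a) * Complex.ofReal (iteratedDeriv 2 q a)).re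
      - (1 / 2 : ℝ) * (iteratedDeriv 3 u b * (starRingEnd ℂ) (u b) * Complex.ofReal (deriv q b)
          - iteratedDeriv 3 u a * (starRingEnd ℂ) (u a) * Complex.ofReal (deriv q a)).re := by
  -- continuity of all derivatives
  have hcu : ∀ n : ℕ, n ≤ 4 → Continuous (iteratedDeriv n u) := fun n hn =>
    hu.continuous_iteratedDeriv n (by exact_mod_cast Nat.cast_le.mpr hn)
  have hcq : ∀ n : ℕ, n ≤ 4 → Continuous (iteratedDeriv n q) := fun n hn =>
    hq.continuous_iteratedDeriv n (by exact_mod_cast Nat.cast_le.mpr hn)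
  have cu0 : Continuous u := hu.continuous
  have cu1 : Continuous (deriv u) := by simpa [iteratedDeriv_one] using hcu 1 (by norm_num)
  have cu2 : Continuous (iteratedDeriv 2 u) := hcu 2 (by norm_num)
  have cu3 : Continuous (iteratedDeriv 3 u) := hcu 3 (by norm_num)
  have cu4 : Continuous (iteratedDeriv 4 u) := hcu 4 le_rfl
  have cq0 : Continuous q := hq.continuous
  have cq1 : Continuous (deriv q) := by simpa [iteratedDeriv_one] using hcq 1 (by norm_num)
  have cq2 : Continuous (iteratedDeriv 2 q) := hcq 2 (by norm_num)
  have cq3 : Continuous (iteratedDeriv 3 q) := hcq 3 (by norm_num)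
  have cq4 : Continuous (iteratedDeriv 4 q) := hcq 4 le_rfl
  -- derivative facts
  have hdu : ∀ n : ℕ, n < 4 → ∀ x : ℝ,
      HasDerivAt (iteratedDeriv n u) (iteratedDeriv (n+1) u x) x := by
    intro n hn x
    have := ((hu.differentiable_iteratedDeriv n (by exact_mod_cast hn)) x).hasDerivAt
    rwa [← iteratedDeriv_succ] at this
  have hdq : ∀ n : ℕ, n < 4 → ∀ x : ℝ,
      HasDerivAt (iteratedDeriv n q) (iteratedDeriv (n+1) q x) x := by
    intro n hn x
    have := ((hq.differentiable_iteratedDeriv n (by exact_mod_cast hn)) x).hasDerivAt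
    rwa [← iteratedDeriv_succ] at this
  have d0 : ∀ x : ℝ, HasDerivAt u (deriv u x) x := fun x => by
    simpa [iteratedDeriv_one, iteratedDeriv_zero] using hdu 0 (by norm_num) x
  have d1 : ∀ x : ℝ, HasDerivAt (deriv u) (iteratedDeriv 2 u x) x := fun x => by
    simpa [iteratedDeriv_one] using hdu 1 (by norm_num) x
  have d2 : ∀ x : ℝ, HasDerivAt (iteratedDeriv 2 u) (iteratedDeriv 3 u x) x :=
    hdu 2 (by norm_num)
  have d3 : ∀ x : ℝ, HasDerivAt (iteratedDeriv 3 u) (iteratedDeriv 4 u x) x :=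
    hdu 3 (by norm_num)
  have e0 : ∀ x : ℝ, HasDerivAt q (deriv q x) x := fun x => by
    simpa [iteratedDeriv_one, iteratedDeriv_zero] using hdq 0 (by norm_num) x
  have e1 : ∀ x : ℝ, HasDerivAt (deriv q) (iteratedDeriv 2 q x) x := fun x => by
    simpa [iteratedDeriv_one] using hdq 1 (by norm_num) x
  have e2 : ∀ x : ℝ, HasDerivAt (iteratedDeriv 2 q) (iteratedDeriv 3 q x) x :=
    hdq 2 (by norm_num)
  have e3 : ∀ x : ℝ, HasDerivAt (iteratedDeriv 3 q) (iteratedDeriv 4 q x) x :=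
    hdq 3 (by norm_num)
  -- conjugates and real coercions
  have s0 : ∀ x : ℝ, HasDerivAt (fun y => (starRingEnd ℂ) (u y))
      ((starRingEnd ℂ) (deriv u x)) x := fun x => (d0 x).star
  have s1 : ∀ x : ℝ, HasDerivAt (fun y => (starRingEnd ℂ) (deriv u y))
      ((starRingEnd ℂ) (iteratedDeriv 2 u x)) x := fun x => (d1 x).star
  have s2 : ∀ x : ℝ, HasDerivAt (fun y => (starRingEnd ℂ) (iteratedDeriv 2 u y))
      ((starRingEnd ℂ) (iteratedDeriv 3 u x)) x := fun x => (d2 x).star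
  have r0 : ∀ x : ℝ, HasDerivAt (fun y => ((q y : ℝ) : ℂ)) ((deriv q x : ℝ) : ℂ) x :=
    fun x => (e0 x).ofReal_comp
  have r1 : ∀ x : ℝ, HasDerivAt (fun y => ((deriv q y : ℝ) : ℂ))
      ((iteratedDeriv 2 q x : ℝ) : ℂ) x := fun x => (e1 x).ofReal_comp
  have r2 : ∀ x : ℝ, HasDerivAt (fun y => ((iteratedDeriv 2 q y : ℝ) : ℂ))
      ((iteratedDeriv 3 q x : ℝ) : ℂ) x := fun x => (e2 x).ofReal_comp
  have r3 : ∀ x : ℝ, HasDerivAt (fun y => ((iteratedDeriv 3 q y : ℝ) : ℂ))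
      ((iteratedDeriv 4 q x : ℝ) : ℂ) x := fun x => (e3 x).ofReal_comp
  -- the antiderivative (complex form)
  set F : ℝ → ℂ := fun x =>
    ((1/2 : ℝ) : ℂ) * iteratedDeriv 2 u x * (starRingEnd ℂ) (iteratedDeriv 2 u x) * ((q x : ℝ) : ℂ)
    - deriv u x * (starRingEnd ℂ) (deriv u x) * ((iteratedDeriv 2 q x : ℝ) : ℂ)
    + ((3/2 : ℝ) : ℂ) * iteratedDeriv 2 u x * (starRingEnd ℂ) (deriv u x) * ((deriv q x : ℝ) : ℂ)
    - iteratedDeriv 3 u x * (starRingEnd ℂ) (deriv u x) * ((q x : ℝ) : ℂ)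
    - ((1/2 : ℝ) : ℂ) * deriv u x * (starRingEnd ℂ) (u x) * ((iteratedDeriv 3 q x : ℝ) : ℂ)
    + ((1/2 : ℝ) : ℂ) * iteratedDeriv 2 u x * (starRingEnd ℂ) (u x) * ((iteratedDeriv 2 q x : ℝ) : ℂ)
    - ((1/2 : ℝ) : ℂ) * iteratedDeriv 3 u x * (starRingEnd ℂ) (u x) * ((deriv q x : ℝ) : ℂ)
    with hFdef
  set dF : ℝ → ℂ := fun x =>
    ((1/2 : ℝ) : ℂ) * ((iteratedDeriv 3 u x * (starRingEnd ℂ) (iteratedDeriv 2 u x)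
        + iteratedDeriv 2 u x * (starRingEnd ℂ) (iteratedDeriv 3 u x)) * ((q x : ℝ) : ℂ)
        + iteratedDeriv 2 u x * (starRingEnd ℂ) (iteratedDeriv 2 u x) * ((deriv q x : ℝ) : ℂ))
    - ((iteratedDeriv 2 u x * (starRingEnd ℂ) (deriv u x)
        + deriv u x * (starRingEnd ℂ) (iteratedDeriv 2 u x)) * ((iteratedDeriv 2 q x : ℝ) : ℂ)
        + deriv u x * (starRingEnd ℂ) (deriv u x) * ((iteratedDeriv 3 q x : ℝ) : ℂ))
    + ((3/2 : ℝ) : ℂ) * ((iteratedDeriv 3 u x * (starRingEnd ℂ) (deriv u x)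
        + iteratedDeriv 2 u x * (starRingEnd ℂ) (iteratedDeriv 2 u x)) * ((deriv q x : ℝ) : ℂ)
        + iteratedDeriv 2 u x * (starRingEnd ℂ) (deriv u x) * ((iteratedDeriv 2 q x : ℝ) : ℂ))
    - ((iteratedDeriv 4 u x * (starRingEnd ℂ) (deriv u x)
        + iteratedDeriv 3 u x * (starRingEnd ℂ) (iteratedDeriv 2 u x)) * ((q x : ℝ) : ℂ)
        + iteratedDeriv 3 u x * (starRingEnd ℂ) (deriv u x) * ((deriv q x : ℝ) : ℂ))
    - ((1/2 : ℝ) : ℂ) * ((iteratedDeriv 2 u x * (starRingEnd ℂ) (u x)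
        + deriv u x * (starRingEnd ℂ) (deriv u x)) * ((iteratedDeriv 3 q x : ℝ) : ℂ)
        + deriv u x * (starRingEnd ℂ) (u x) * ((iteratedDeriv 4 q x : ℝ) : ℂ))
    + ((1/2 : ℝ) : ℂ) * ((iteratedDeriv 3 u x * (starRingEnd ℂ) (u x)
        + iteratedDeriv 2 u x * (starRingEnd ℂ) (deriv u x)) * ((iteratedDeriv 2 q x : ℝ) : ℂ)
        + iteratedDeriv 2 u x * (starRingEnd ℂ) (u x) * ((iteratedDeriv 3 q x : ℝ) : ℂ))
    - ((1/2 : ℝ) : ℂ) * ((iteratedDeriv 4 u x * (starRingEnd ℂ) (u x)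
        + iteratedDeriv 3 u x * (starRingEnd ℂ) (deriv u x)) * ((deriv q x : ℝ) : ℂ)
        + iteratedDeriv 3 u x * (starRingEnd ℂ) (u x) * ((iteratedDeriv 2 q x : ℝ) : ℂ))
    with hdFdef
  have hFd : ∀ x : ℝ, HasDerivAt F (dF x) x := by
    intro x
    have h :=
      (((((((((d2 x).const_mul ((1/2 : ℝ) : ℂ)).mul (s2 x)).mul (r0 x)).sub
        (((d1 x).mul (s1 x)).mul (r2 x))).add
        ((((d2 x).const_mul ((3/2 : ℝ) : ℂ)).mul (s1 x)).mul (r1 x))).sub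
        (((d3 x).mul (s1 x)).mul (r0 x))).sub
        ((((d1 x).const_mul ((1/2 : ℝ) : ℂ)).mul (s0 x)).mul (r3 x))).add
        ((((d2 x).const_mul ((1/2 : ℝ) : ℂ)).mul (s0 x)).mul (r2 x))).sub
        ((((d3 x).const_mul ((1/2 : ℝ) : ℂ)).mul (s0 x)).mul (r1 x))
    rw [hFdef, hdFdef]
    convert h using 1
    · rfl
    · rfl
    simp only [Pi.mul_apply]
    ring
  set g : ℝ → ℝ := fun x =>
    -(iteratedDeriv 4 u x * ((starRingEnd ℂ) (deriv u x) * ((q x : ℝ) : ℂ)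
        + ((1/2 : ℝ) : ℂ) * (starRingEnd ℂ) (u x) * ((deriv q x : ℝ) : ℂ))).re
    + 2 * (‖iteratedDeriv 2 u x‖ ^ 2 * deriv q x)
    - (3/2 : ℝ) * (‖deriv u x‖ ^ 2 * iteratedDeriv 3 q x)
    - (1/2 : ℝ) * (deriv u x * (starRingEnd ℂ) (u x) * ((iteratedDeriv 4 q x : ℝ) : ℂ)).re
    with hgdef
  have hgre : ∀ x : ℝ, HasDerivAt (fun y => (F y).re) (g x) x := by
    intro x
    have h := (Complex.reCLM.hasFDerivAt (x := F x)).comp_hasDerivAt x (hFd x)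
    convert h using 1
    · rfl
    · rfl
    · rfl
    rw [hgdef, hdFdef]
    simp only [Complex.reCLM_apply, Complex.add_re, Complex.sub_re, Complex.neg_re,
      Complex.add_im, Complex.sub_im, Complex.neg_im,
      Complex.mul_re, Complex.mul_im, Complex.ofReal_re, Complex.ofReal_im,
      Complex.conj_re, Complex.conj_im, Complex.sq_norm,
      Complex.normSq_apply]
    ring
  have hgc : Continuous g := by rw [hgdef]; fun_prop
  have hFTC : (∫ x in a..b, g x) = (F b).re - (F a).re :=
    integral_eq_sub_of_hasDerivAt (fun x _ => hgre x) (hgc.intervalIntegrable a b)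
  have hsplit : (∫ x in a..b, g x)
      = -(∫ x in a..b, (iteratedDeriv 4 u x * ((starRingEnd ℂ) (deriv u x) * ((q x : ℝ) : ℂ)
            + ((1/2 : ℝ) : ℂ) * (starRingEnd ℂ) (u x) * ((deriv q x : ℝ) : ℂ))).re)
        + 2 * (∫ x in a..b, ‖iteratedDeriv 2 u x‖ ^ 2 * deriv q x)
        - (3/2 : ℝ) * (∫ x in a..b, ‖deriv u x‖ ^ 2 * iteratedDeriv 3 q x)
        - (1/2 : ℝ) * (∫ x in a..b,
            (deriv u x * (starRingEnd ℂ) (u x) * ((iteratedDeriv 4 q x : ℝ) : ℂ)).re) := by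
    simp only [hgdef]
    rw [integral_sub, integral_sub, integral_add, integral_neg,
      integral_const_mul, integral_const_mul, integral_const_mul]
    all_goals exact Continuous.intervalIntegrable (by fun_prop) a b
  have hre1 : (∫ x in a..b, iteratedDeriv 4 u x * ((starRingEnd ℂ) (deriv u x) * ((q x : ℝ) : ℂ)
        + ((1/2 : ℝ) : ℂ) * (starRingEnd ℂ) (u x) * ((deriv q x : ℝ) : ℂ))).re
      = ∫ x in a..b, (iteratedDeriv 4 u x * ((starRingEnd ℂ) (deriv u x) * ((q x : ℝ) : ℂ)
        + ((1/2 : ℝ) : ℂ) * (starRingEnd ℂ) (u x) * ((deriv q x : ℝ) : ℂ))).re := by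
    have hc : Continuous fun x => iteratedDeriv 4 u x *
        ((starRingEnd ℂ) (deriv u x) * ((q x : ℝ) : ℂ)
          + ((1/2 : ℝ) : ℂ) * (starRingEnd ℂ) (u x) * ((deriv q x : ℝ) : ℂ)) :=
      cu4.mul (((cu1.star).mul (Complex.continuous_ofReal.comp cq0)).add
        ((continuous_const.mul (cu0.star)).mul (Complex.continuous_ofReal.comp cq1)))
    have := Complex.reCLM.intervalIntegral_comp_comm (hc.intervalIntegrable (μ := MeasureTheory.volume) a b)
    simpa using this.symm
  have hre2 : (∫ x in a..b,
        deriv u x * (starRingEnd ℂ) (u x) * ((iteratedDeriv 4 q x : ℝ) : ℂ)).re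
      = ∫ x in a..b,
        (deriv u x * (starRingEnd ℂ) (u x) * ((iteratedDeriv 4 q x : ℝ) : ℂ)).re := by
    have hc : Continuous fun x =>
        deriv u x * (starRingEnd ℂ) (u x) * ((iteratedDeriv 4 q x : ℝ) : ℂ) :=
      (cu1.mul (cu0.star)).mul (Complex.continuous_ofReal.comp cq4)
    have := Complex.reCLM.intervalIntegral_comp_comm (hc.intervalIntegrable (μ := MeasureTheory.volume) a b)
    simpa using this.symm
  have hFre : ∀ x : ℝ, (F x).re =
      (1/2 : ℝ) * (‖iteratedDeriv 2 u x‖ ^ 2 * q x)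
      - ‖deriv u x‖ ^ 2 * iteratedDeriv 2 q x
      + (3/2 : ℝ) * (iteratedDeriv 2 u x * (starRingEnd ℂ) (deriv u x) * ((deriv q x : ℝ) : ℂ)).re
      - (iteratedDeriv 3 u x * (starRingEnd ℂ) (deriv u x) * ((q x : ℝ) : ℂ)).re
      - (1/2 : ℝ) * (deriv u x * (starRingEnd ℂ) (u x) * ((iteratedDeriv 3 q x : ℝ) : ℂ)).re
      + (1/2 : ℝ) * (iteratedDeriv 2 u x * (starRingEnd ℂ) (u x) * ((iteratedDeriv 2 q x : ℝ) : ℂ)).re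
      - (1/2 : ℝ) * (iteratedDeriv 3 u x * (starRingEnd ℂ) (u x) * ((deriv q x : ℝ) : ℂ)).re := by
    intro x
    rw [hFdef]
    simp only [Complex.add_re, Complex.sub_re, Complex.neg_re,
      Complex.add_im, Complex.sub_im, Complex.neg_im,
      Complex.mul_re, Complex.mul_im, Complex.ofReal_re, Complex.ofReal_im,
      Complex.conj_re, Complex.conj_im, Complex.sq_norm,
      Complex.normSq_apply]
    ring
  have hhalf : (1 / 2 : ℂ) = ((1/2 : ℝ) : ℂ) := by norm_num
  rw [hhalf, hre1, hre2]
  simp only [Complex.sub_re] at *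
  linarith [hFTC, hsplit, hFre a, hFre b]
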